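/- Suppose a = 0 and f = 0, and let X = X(0,b,c,d,e,0). If b ≠ 0, then rank X² = 1 if 3c² − 4bd = 0 and rank X² = 2 otherwise. If b = 0, then rank X² = 0 if c = 0 and rank X² = 1 if c ≠ 0. -/

import Mathlib

/-- The image of the general nilpotent element
`a·e_{α₁} + b·e_{α₁+α₂} + c·e_{2α₁+α₂} + d·e_{3α₁+α₂} + e·e_{3α₁+2α₂} + f·e_{α₂}`
of the Lie algebra `g₂` over `F` in its faithful 7-dimensional representation. -/
noncomputable def g2X {F : Type*} [Field F] (a b c d e f : F) :
    Matrix (Fin 7) (Fin 7) F :=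
  !![0, a, b, 2*c, d, e, 0;
     0, 0, f, -2*b, -c, 0, e;
     0, 0, 0, 2*a, 0, -c, -d;
     0, 0, 0, 0, a, b, c;
     0, 0, 0, 0, 0, f, -b;
     0, 0, 0, 0, 0, 0, a;
     0, 0, 0, 0, 0, 0, 0]

namespace G2Case4Aux

open Matrix

@[simp]
lemma cons_val_five' {α : Type*} {m : ℕ} (x : α) (u : Fin (m+5) → α) :
    Matrix.vecCons x u 5 = vecHead (vecTail (vecTail (vecTail (vecTail u)))) :=
  rfl

@[simp]
lemma cons_val_six' {α : Type*} {m : ℕ} (x : α) (u : Fin (m+6) → α) :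
    Matrix.vecCons x u 6 = vecHead (vecTail (vecTail (vecTail (vecTail (vecTail u))))) :=
  rfl

/-- The generic shape of `X²` in our situation. -/
def N {F : Type*} [Field F] (p q r s : F) : Matrix (Fin 7) (Fin 7) F :=
  !![0,0,0,0,0,p,q;
     0,0,0,0,0,r,s;
     0,0,0,0,0,0,0;
     0,0,0,0,0,0,0;
     0,0,0,0,0,0,0;
     0,0,0,0,0,0,0;
     0,0,0,0,0,0,0]

lemma rank_sandwich {F : Type*} [Field F] {m n : ℕ} (M : Matrix (Fin m) (Fin m) F)
    (K : Matrix (Fin n) (Fin n) F) (A : Matrix (Fin m) (Fin n) F) (B : Matrix (Fin n) (Fin m) F)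
    (P : Matrix (Fin n) (Fin m) F) (Q : Matrix (Fin m) (Fin n) F)
    (h1 : M = A * K * B) (h2 : K = P * M * Q) (hK : IsUnit K) : M.rank = n := by
  have hKr : K.rank = n := by
    rw [Matrix.rank_of_isUnit K hK, Fintype.card_fin]
  have hle : M.rank ≤ n := by
    calc M.rank = (A * (K * B)).rank := by rw [h1, Matrix.mul_assoc]
    _ ≤ (K * B).rank := Matrix.rank_mul_le_right _ _
    _ ≤ K.rank := Matrix.rank_mul_le_left _ _
    _ = n := hKr
  have hge : n ≤ M.rank := by
    calc n = K.rank := hKr.symm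
    _ = (P * (M * Q)).rank := by rw [h2, Matrix.mul_assoc]
    _ ≤ (M * Q).rank := Matrix.rank_mul_le_right _ _
    _ ≤ M.rank := Matrix.rank_mul_le_left _ _
  exact le_antisymm hle hge

lemma one_le_rank {F : Type*} [Field F] {m n : ℕ} (M : Matrix (Fin m) (Fin n) F)
    (i : Fin m) (j : Fin n) (h : M i j ≠ 0) : 1 ≤ M.rank := by
  rw [Nat.one_le_iff_ne_zero]
  intro h0
  rw [Matrix.rank, Submodule.finrank_eq_zero] at h0
  have hmem : M.mulVecLin (Pi.single j 1) ∈ LinearMap.range M.mulVecLin :=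
    LinearMap.mem_range_self _ _
  rw [h0, Submodule.mem_bot] at hmem
  apply h
  have := congrFun hmem i
  simpa [Matrix.mulVecLin_apply, Matrix.mulVec_single] using this

lemma rank_le_one_of_factor {F : Type*} [Field F] {m n : ℕ} (M : Matrix (Fin m) (Fin n) F)
    (A : Matrix (Fin m) (Fin 1) F) (B : Matrix (Fin 1) (Fin n) F)
    (h : M = A * B) : M.rank ≤ 1 := by
  calc M.rank = (A * B).rank := by rw [h]
  _ ≤ A.rank := Matrix.rank_mul_le_left _ _
  _ ≤ Fintype.card (Fin 1) := A.rank_le_card_width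
  _ = 1 := by simp

set_option maxHeartbeats 1000000 in
lemma g2X_sq {F : Type*} [Field F] (b c d e : F) :
    (g2X 0 b c d e 0) ^ 2 = N (b*c) (2*c^2-2*b*d) (-2*b^2) (-(b*c)) := by
  rw [pow_two]
  ext i j
  rw [Matrix.mul_apply, Fin.sum_univ_seven]
  fin_cases i <;> fin_cases j <;>
    simp [g2X, N, Matrix.vecHead, Matrix.vecTail] <;> ring

set_option maxHeartbeats 1000000 in
lemma N_fac {F : Type*} [Field F] (u₀ u₁ v₅ v₆ p q r s : F)
    (hp : p = u₀*v₅) (hq : q = u₀*v₆) (hr : r = u₁*v₅) (hs : s = u₁*v₆) :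
    N p q r s = !![u₀; u₁; 0; 0; 0; 0; 0] * !![0,0,0,0,0,v₅,v₆] := by
  subst hp hq hr hs
  ext i j
  rw [Matrix.mul_apply, Fin.sum_univ_one]
  fin_cases i <;> fin_cases j <;>
    simp [N, Matrix.vecHead, Matrix.vecTail]

set_option maxHeartbeats 1000000 in
lemma N_sandwich₁ {F : Type*} [Field F] (p q r s : F) :
    N p q r s =
      !![(1:F),0; 0,1; 0,0; 0,0; 0,0; 0,0; 0,0] * !![p,q; r,s] *
        !![(0:F),0,0,0,0,1,0; 0,0,0,0,0,0,1] := by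
  ext i j
  rw [Matrix.mul_apply, Fin.sum_univ_two]
  fin_cases i <;> fin_cases j <;>
    simp [N, Matrix.mul_apply, Fin.sum_univ_two, Matrix.vecHead, Matrix.vecTail]

set_option maxHeartbeats 1000000 in
lemma N_sandwich₂ {F : Type*} [Field F] (p q r s : F) :
    !![p,q; r,s] =
      !![(1:F),0,0,0,0,0,0; 0,1,0,0,0,0,0] * N p q r s *
        !![(0:F),0; 0,0; 0,0; 0,0; 0,0; 1,0; 0,1] := by
  ext i j
  rw [Matrix.mul_apply, Fin.sum_univ_seven]
  fin_cases i <;> fin_cases j <;>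
    simp [N, Matrix.mul_apply, Fin.sum_univ_seven, Matrix.vecHead, Matrix.vecTail]

lemma N_zero {F : Type*} [Field F] : N (0:F) 0 0 0 = 0 := by
  have h := N_fac (0:F) 0 0 0 0 0 0 0 (by ring) (by ring) (by ring) (by ring)
  rw [h]
  have : (!![(0:F); 0; 0; 0; 0; 0; 0] : Matrix (Fin 7) (Fin 1) F) = 0 := by
    ext i j
    fin_cases i <;> fin_cases j <;> simp [Matrix.vecHead, Matrix.vecTail]
  rw [this, Matrix.zero_mul]

lemma N_apply_15 {F : Type*} [Field F] (p q r s : F) : N p q r s 1 5 = r := rfl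

lemma N_apply_06 {F : Type*} [Field F] (p q r s : F) : N p q r s 0 6 = q := rfl

end G2Case4Aux

/-- Let `a = 0` and `f = 0`, `X = X(0,b,c,d,e,0)`. If `b ≠ 0` then `rank X² = 1`
when `3c² − 4bd = 0` and `rank X² = 2` otherwise. If `b = 0` then `rank X² = 0`
when `c = 0` and `rank X² = 1` when `c ≠ 0`. -/
theorem g2_case4_rank_X_sq (F : Type*) [Field F] [Fintype F] (hchar : 3 < ringChar F)
    (b c d e : F) :
    (b ≠ 0 → (3 * c ^ 2 - 4 * b * d = 0 → ((g2X 0 b c d e 0) ^ 2).rank = 1) ∧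
      (3 * c ^ 2 - 4 * b * d ≠ 0 → ((g2X 0 b c d e 0) ^ 2).rank = 2)) ∧
    (b = 0 → (c = 0 → ((g2X 0 b c d e 0) ^ 2).rank = 0) ∧
      (c ≠ 0 → ((g2X 0 b c d e 0) ^ 2).rank = 1)) := by
  have h2 : (2 : F) ≠ 0 := by
    intro h
    have := (ringChar.spec F 2).mp (by exact_mod_cast h)
    have := Nat.le_of_dvd (by norm_num) this
    omega
  rw [G2Case4Aux.g2X_sq]
  constructor
  · intro hb
    constructor
    · intro hd
      -- rank 1
      have hb2 : (2*b^2 : F) ≠ 0 := mul_ne_zero h2 (pow_ne_zero _ hb)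
      have hne : G2Case4Aux.N (b*c) (2*c^2-2*b*d) (-2*b^2) (-(b*c)) 1 5 ≠ 0 := by
        rw [G2Case4Aux.N_apply_15]
        intro h
        apply hb2
        have : (-(2*b^2) : F) = 0 := by rw [← h]; ring
        exact neg_eq_zero.mp this
      have hge := G2Case4Aux.one_le_rank _ 1 5 hne
      have hfac := G2Case4Aux.N_fac (-c/(2*b)) 1 (-2*b^2) (-(b*c))
        (b*c) (2*c^2-2*b*d) (-2*b^2) (-(b*c))
        (by field_simp)
        (by field_simp; linear_combination hd)
        (by ring) (by ring)
      have hle := G2Case4Aux.rank_le_one_of_factor _ _ _ hfac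
      exact le_antisymm hle hge
    · intro hd
      -- rank 2
      refine G2Case4Aux.rank_sandwich _ !![b*c, 2*c^2-2*b*d; -2*b^2, -(b*c)] _ _ _ _
        (G2Case4Aux.N_sandwich₁ _ _ _ _) (G2Case4Aux.N_sandwich₂ _ _ _ _) ?_
      rw [Matrix.isUnit_iff_isUnit_det, Matrix.det_fin_two_of, isUnit_iff_ne_zero]
      intro h
      apply hd
      have hkey : b*c*(-(b*c)) - (2*c^2-2*b*d)*(-2*b^2) = b^2*(3*c^2-4*b*d) := by ring
      rw [hkey] at h
      exact (mul_eq_zero.mp h).resolve_left (pow_ne_zero 2 hb)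
  · intro hb
    subst hb
    constructor
    · intro hc
      subst hc
      have hz : G2Case4Aux.N ((0:F)*0) (2*0^2-2*0*d) (-2*(0:F)^2) (-((0:F)*0)) =
          G2Case4Aux.N (0:F) 0 0 0 := by norm_num
      rw [hz, G2Case4Aux.N_zero, Matrix.rank_zero]
    · intro hc
      have hne : G2Case4Aux.N ((0:F)*c) (2*c^2-2*0*d) (-2*(0:F)^2) (-((0:F)*c)) 0 6 ≠ 0 := by
        rw [G2Case4Aux.N_apply_06]
        intro h
        apply mul_ne_zero h2 (pow_ne_zero 2 hc)
        linear_combination h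
      have hge := G2Case4Aux.one_le_rank _ 0 6 hne
      have hfac := G2Case4Aux.N_fac (2*c^2) 0 0 1
        ((0:F)*c) (2*c^2-2*0*d) (-2*(0:F)^2) (-((0:F)*c))
        (by ring) (by ring) (by ring) (by ring)
      have hle := G2Case4Aux.rank_le_one_of_factor _ _ _ hfac
      exact le_antisymm hle hge
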